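/- Let G be a stochastic game with terminal set T and let v ∈ V. If Prob^{σ1,σ2}_{G,v}(◇T) < 1 for some strategy σ1 ∈ Σ1 and some fair strategy σ2, then there exist a memoryless and deterministic strategy σ1' for Player 1 and a fair strategy σ2' for Player 2 such that Prob^{σ1',σ2'}_{G,v}(◇T) < 1. -/

import Mathlib

open MeasureTheory
open scoped ENNReal Classical

/-- A turn-based two-player stochastic game on a finite vertex set `V`. -/
structure StochGame (V : Type*) [Fintype V] where
  /-- Player 1 vertices -/
  V1 : Finset V
  /-- Player 2 vertices -/
  V2 : Finset V
  /-- probabilistic vertices -/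
  VP : Finset V
  cover : ∀ v : V, v ∈ V1 ∨ v ∈ V2 ∨ v ∈ VP
  disj12 : ∀ v : V, ¬(v ∈ V1 ∧ v ∈ V2)
  disj1P : ∀ v : V, ¬(v ∈ V1 ∧ v ∈ VP)
  disj2P : ∀ v : V, ¬(v ∈ V2 ∧ v ∈ VP)
  /-- the probabilistic transition function -/
  δ : V → V → ℝ
  δ_nonneg : ∀ v v', 0 ≤ δ v v'
  δ_le_one : ∀ v v', δ v v' ≤ 1
  det : ∀ v : V, (v ∈ V1 ∨ v ∈ V2) → ∀ v', δ v v' = 0 ∨ δ v v' = 1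
  prob : ∀ v ∈ VP, ∑ v' : V, δ v v' = 1
  post_nonempty : ∀ v : V, ∃ v', 0 < δ v v'

namespace StochGame

variable {V : Type*} [Fintype V]

/-- successors of a vertex -/
def post (G : StochGame V) (v : V) : Set V := {v' | 0 < G.δ v v'}

/-- a vertex is terminal if `δ(v,v) = 1` and `δ(v,v') = 0` for `v' ≠ v`. -/
def Terminal (G : StochGame V) (v : V) : Prop :=
  G.δ v v = 1 ∧ ∀ v', v' ≠ v → G.δ v v' = 0

/-- A strategy for the player owning the vertices in `P`: a function assigning to each
finite history and current vertex a probability distribution over vertices, supported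
on successors when the current vertex belongs to `P`. -/
structure Strategy (G : StochGame V) (P : Finset V) where
  f : List V → V → V → ℝ
  nonneg : ∀ h v v', 0 ≤ f h v v'
  sum_one : ∀ h v, ∑ v' : V, f h v v' = 1
  support : ∀ h v, v ∈ P → ∀ v', 0 < f h v v' → 0 < G.δ v v'

variable {G : StochGame V} {P : Finset V}

/-- a memoryless strategy only depends on the current vertex -/
def Strategy.Memoryless (σ : Strategy G P) : Prop :=
  ∀ h h' cur, σ.f h cur = σ.f h' cur

/-- a deterministic (pure) strategy takes Dirac distributions as values -/
def Strategy.Deterministic (σ : Strategy G P) : Prop :=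
  ∀ h cur, ∃ v', ∀ u, σ.f h cur u = if u = v' then 1 else 0

/-- a semi-Markov strategy depends only on the initial vertex, the number of elapsed
steps and the current vertex -/
def Strategy.SemiMarkov (σ : Strategy G P) : Prop :=
  ∀ (v0 : V) (h h' : List V) (cur : V), h.length = h'.length →
    σ.f (v0 :: h) cur = σ.f (v0 :: h') cur

variable [DecidableEq V]

/-- one-step transition probability given strategies of both players -/
noncomputable def step (G : StochGame V) (σ1 : Strategy G G.V1) (σ2 : Strategy G G.V2)
    (h : List V) (v v' : V) : ℝ :=
  if v ∈ G.V1 then σ1.f h v v' else if v ∈ G.V2 then σ2.f h v v' else G.δ v v'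

/-- the history consisting of the first `i` vertices of `w` -/
def hist (w : ℕ → V) (i : ℕ) : List V := (List.range i).map w

/-- probability that the play starts with the vertices `w 0, w 1, …, w n` when
the game starts at `v` and the players use strategies `σ1`, `σ2`. -/
noncomputable def prefixProb (G : StochGame V) (σ1 : Strategy G G.V1) (σ2 : Strategy G G.V2)
    (v : V) (n : ℕ) (w : ℕ → V) : ℝ :=
  (if w 0 = v then 1 else 0) *
    ∏ i ∈ Finset.range n, G.step σ1 σ2 (hist w i) (w i) (w (i + 1))

/-- the cylinder of all infinite plays agreeing with `w` on the first `n+1` coordinates -/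
def cyl (n : ℕ) (w : ℕ → V) : Set (ℕ → V) := {ω | ∀ i ≤ n, ω i = w i}

variable [MeasurableSpace V]

/-- `μ` is the path measure of the game `G` starting at `v` under strategies `σ1, σ2`:
it is the (unique) probability measure on `V^ω` (with the product σ-algebra) whose
cylinder probabilities are given by the products of the transition probabilities. -/
def IsPathMeasure (G : StochGame V) (σ1 : Strategy G G.V1) (σ2 : Strategy G G.V2)
    (v : V) (μ : Measure (ℕ → V)) : Prop :=
  IsProbabilityMeasure μ ∧
    ∀ (n : ℕ) (w : ℕ → V), μ (cyl n w) = ENNReal.ofReal (G.prefixProb σ1 σ2 v n w)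

/-- the set of vertices occurring infinitely often in a play -/
def infOcc (ω : ℕ → V) : Set V := {u | ∀ N, ∃ n, N ≤ n ∧ ω n = u}

/-- the set of plays that are fair for Player 2 -/
def FP2 (G : StochGame V) : Set (ℕ → V) :=
  {ω | ∀ u ∈ G.V2, u ∈ infOcc ω → ∀ u' ∈ G.post u, u' ∈ infOcc ω}

/-- the event `◇T` that a terminal vertex is reached -/
def ReachT (G : StochGame V) : Set (ℕ → V) := {ω | ∃ i, G.Terminal (ω i)}

/-- A Player 2 strategy is (almost surely) fair if the fair plays have probability 1
under any Player 1 strategy and any initial vertex. -/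
def Fair (G : StochGame V) (σ2 : Strategy G G.V2) : Prop :=
  ∀ (σ1 : Strategy G G.V1) (v : V) (μ : Measure (ℕ → V)),
    G.IsPathMeasure σ1 σ2 v μ → μ G.FP2 = 1

/-- `G` is stopping under fairness: a terminal vertex is reached almost surely
whenever Player 2 plays a fair strategy. -/
def StoppingUnderFairness (G : StochGame V) : Prop :=
  ∀ (σ1 : Strategy G G.V1) (σ2 : Strategy G G.V2), G.Fair σ2 →
    ∀ (v : V) (μ : Measure (ℕ → V)), G.IsPathMeasure σ1 σ2 v μ → μ G.ReachT = 1

/-- the total accumulated reward of a play -/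
noncomputable def rew (r : V → ℝ) (ω : ℕ → V) : ℝ≥0∞ := ∑' i, ENNReal.ofReal (r (ω i))

/-- the expected total reward -/
noncomputable def expRew (μ : Measure (ℕ → V)) (r : V → ℝ) : ℝ≥0∞ := ∫⁻ ω, rew r ω ∂μ

end StochGame


section Aux

set_option linter.unusedSectionVars false

open StochGame

variable {V : Type*} [Fintype V] [DecidableEq V]

lemma aux_step_nonneg (G : StochGame V) (σ1 : G.Strategy G.V1) (σ2 : G.Strategy G.V2)
    (h : List V) (a b : V) : 0 ≤ G.step σ1 σ2 h a b := by
  unfold StochGame.step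
  split_ifs
  · exact σ1.nonneg _ _ _
  · exact σ2.nonneg _ _ _
  · exact G.δ_nonneg _ _

lemma aux_step_sum (G : StochGame V) (σ1 : G.Strategy G.V1) (σ2 : G.Strategy G.V2)
    (h : List V) (a : V) : ∑ b : V, G.step σ1 σ2 h a b = 1 := by
  unfold StochGame.step
  split_ifs with h1 h2
  · exact σ1.sum_one _ _
  · exact σ2.sum_one _ _
  · rcases G.cover a with hc | hc | hc
    · exact absurd hc h1
    · exact absurd hc h2
    · exact G.prob a hc

lemma aux_step_le_one (G : StochGame V) (σ1 : G.Strategy G.V1) (σ2 : G.Strategy G.V2)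
    (h : List V) (a b : V) : G.step σ1 σ2 h a b ≤ 1 := by
  calc G.step σ1 σ2 h a b ≤ ∑ b' : V, G.step σ1 σ2 h a b' :=
        Finset.single_le_sum (fun x _ => aux_step_nonneg G σ1 σ2 h a x) (Finset.mem_univ b)
    _ = 1 := aux_step_sum G σ1 σ2 h a

lemma aux_step_zero (G : StochGame V) (σ1 : G.Strategy G.V1) (σ2 : G.Strategy G.V2)
    (h : List V) (a b : V) (hb : ¬ 0 < G.δ a b) : G.step σ1 σ2 h a b = 0 := by
  unfold StochGame.step
  split_ifs with h1 h2
  · by_contra hne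
    exact hb (σ1.support h a h1 b (lt_of_le_of_ne (σ1.nonneg _ _ _) (Ne.symm hne)))
  · by_contra hne
    exact hb (σ2.support h a h2 b (lt_of_le_of_ne (σ2.nonneg _ _ _) (Ne.symm hne)))
  · exact le_antisymm (not_lt.mp hb) (G.δ_nonneg a b)

lemma aux_prefixProb_nonneg (G : StochGame V) (σ1 : G.Strategy G.V1) (σ2 : G.Strategy G.V2)
    (v : V) (n : ℕ) (w : ℕ → V) : 0 ≤ G.prefixProb σ1 σ2 v n w := by
  unfold StochGame.prefixProb
  apply mul_nonneg
  · split_ifs <;> norm_num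
  · exact Finset.prod_nonneg (fun i _ => aux_step_nonneg G σ1 σ2 _ _ _)

lemma aux_prefixProb_succ (G : StochGame V) (σ1 : G.Strategy G.V1) (σ2 : G.Strategy G.V2)
    (v : V) (n : ℕ) (w : ℕ → V) :
    G.prefixProb σ1 σ2 v (n+1) w
      = G.prefixProb σ1 σ2 v n w * G.step σ1 σ2 (hist w n) (w n) (w (n+1)) := by
  unfold StochGame.prefixProb
  rw [Finset.prod_range_succ, mul_assoc]

lemma aux_hist_congr (w w' : ℕ → V) (i : ℕ) (h : ∀ j < i, w j = w' j) :
    hist w i = hist w' i := by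
  unfold StochGame.hist
  exact List.map_congr_left (fun j hj => h j (List.mem_range.mp hj))

lemma aux_prefixProb_congr (G : StochGame V) (σ1 : G.Strategy G.V1) (σ2 : G.Strategy G.V2)
    (v : V) (n : ℕ) (w w' : ℕ → V) (h : ∀ i ≤ n, w i = w' i) :
    G.prefixProb σ1 σ2 v n w = G.prefixProb σ1 σ2 v n w' := by
  unfold StochGame.prefixProb
  rw [h 0 (Nat.zero_le _)]
  congr 1
  apply Finset.prod_congr rfl
  intro i hi
  rw [Finset.mem_range] at hi
  rw [aux_hist_congr w w' i (fun j hj => h j (le_of_lt (lt_of_lt_of_le hj (Nat.le_of_lt_succ (Nat.lt_succ_of_lt hi))))),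
    h i (le_of_lt hi), h (i+1) hi]

/-- extend a finite word to an infinite one -/
def aux_ext (n : ℕ) (w : Fin (n+1) → V) : ℕ → V :=
  fun i => w ⟨min i n, Nat.lt_succ_of_le (min_le_right _ _)⟩

lemma aux_ext_eq (n : ℕ) (w : Fin (n+1) → V) (i : ℕ) (hi : i ≤ n) :
    aux_ext n w i = w ⟨i, Nat.lt_succ_of_le hi⟩ := by
  unfold aux_ext
  congr 1
  exact Fin.ext (min_eq_left hi)


section Meas

variable [MeasurableSpace V] [DiscreteMeasurableSpace V]

lemma aux_cyl_meas (n : ℕ) (w : ℕ → V) : MeasurableSet (cyl n w) := by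
  have : cyl n w = ⋂ (i : ℕ), {ω : ℕ → V | i ≤ n → ω i = w i} := by
    ext ω; simp [StochGame.cyl, Set.mem_iInter]
  rw [this]
  apply MeasurableSet.iInter
  intro i
  by_cases hi : i ≤ n
  · simp only [hi, forall_true_left]
    show MeasurableSet ((fun ω : ℕ → V => ω i) ⁻¹' {w i})
    exact (measurable_pi_apply i) (MeasurableSet.singleton (w i))
  · simp only [hi, false_implies, Set.setOf_true]
    exact MeasurableSet.univ

lemma aux_event_eq (n : ℕ) (R : (ℕ → V) → Prop)
    (hR : ∀ ω ω', (∀ i ≤ n, ω i = ω' i) → R ω → R ω') :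
    {ω | R ω} =
      ⋃ w ∈ Finset.univ.filter (fun w : Fin (n+1) → V => R (aux_ext n w)),
        cyl n (aux_ext n w) := by
  ext ω
  simp only [Set.mem_setOf_eq, Set.mem_iUnion, Finset.mem_filter, Finset.mem_univ, true_and]
  constructor
  · intro hω
    refine ⟨fun i => ω i, ?_, ?_⟩
    · exact hR ω _ (fun i hi => (aux_ext_eq n (fun j : Fin (n+1) => ω j.1) i hi).symm) hω
    · intro i hi
      exact (aux_ext_eq n (fun j : Fin (n+1) => ω j.1) i hi).symm
  · rintro ⟨w, hRw, hcyl⟩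
    exact hR _ ω (fun i hi => (hcyl i hi).symm) hRw

lemma aux_cyl_disjoint (n : ℕ) (w w' : Fin (n+1) → V) (hne : w ≠ w') :
    Disjoint (cyl n (aux_ext n w)) (cyl n (aux_ext n w')) := by
  rw [Set.disjoint_left]
  intro ω hω hω'
  apply hne
  funext i
  have h1 := hω i.1 (Nat.lt_succ_iff.mp i.2)
  have h2 := hω' i.1 (Nat.lt_succ_iff.mp i.2)
  rw [aux_ext_eq n w i.1 (Nat.lt_succ_iff.mp i.2)] at h1
  rw [aux_ext_eq n w' i.1 (Nat.lt_succ_iff.mp i.2)] at h2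
  rw [← h1, ← h2]

lemma aux_meas_coordDet (n : ℕ) (R : (ℕ → V) → Prop)
    (hR : ∀ ω ω', (∀ i ≤ n, ω i = ω' i) → R ω → R ω') :
    MeasurableSet {ω | R ω} := by
  rw [aux_event_eq n R hR]
  exact MeasurableSet.biUnion (Finset.countable_toSet _) (fun w _ => aux_cyl_meas n _)

lemma aux_measure_coordDet (G : StochGame V) (σ1 : G.Strategy G.V1) (σ2 : G.Strategy G.V2)
    (v : V) (μ : Measure (ℕ → V)) (hμ : G.IsPathMeasure σ1 σ2 v μ)
    (n : ℕ) (R : (ℕ → V) → Prop)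
    (hR : ∀ ω ω', (∀ i ≤ n, ω i = ω' i) → R ω → R ω') :
    μ {ω | R ω} =
      ∑ w ∈ Finset.univ.filter (fun w : Fin (n+1) → V => R (aux_ext n w)),
        ENNReal.ofReal (G.prefixProb σ1 σ2 v n (aux_ext n w)) := by
  rw [aux_event_eq n R hR]
  rw [measure_biUnion_finset ?_ (fun w _ => aux_cyl_meas n _)]
  · exact Finset.sum_congr rfl (fun w _ => hμ.2 n _)
  · intro w _ w' _ hne
    exact aux_cyl_disjoint n w w' hne

lemma aux_measure_coordDet_zero (G : StochGame V) (σ1 : G.Strategy G.V1) (σ2 : G.Strategy G.V2)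
    (v : V) (μ : Measure (ℕ → V)) (hμ : G.IsPathMeasure σ1 σ2 v μ)
    (n : ℕ) (R : (ℕ → V) → Prop)
    (hR : ∀ ω ω', (∀ i ≤ n, ω i = ω' i) → R ω → R ω')
    (hz : ∀ w : Fin (n+1) → V, R (aux_ext n w) → G.prefixProb σ1 σ2 v n (aux_ext n w) = 0) :
    μ {ω | R ω} = 0 := by
  rw [aux_measure_coordDet G σ1 σ2 v μ hμ n R hR]
  apply Finset.sum_eq_zero
  intro w hw
  rw [Finset.mem_filter] at hw
  rw [hz w hw.2, ENNReal.ofReal_zero]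

end Meas

section BC

/-- number of occurrences of `u` at times in `[N, n)` -/
def aux_occ (u : V) (N n : ℕ) (ω : ℕ → V) : ℕ :=
  ((Finset.range n).filter (fun t => N ≤ t ∧ ω t = u)).card

/-- some occurrence of `u` at a time in `[N, n)` is followed by `u'` -/
def aux_dead (u u' : V) (N n : ℕ) (ω : ℕ → V) : Prop :=
  ∃ t, t < n ∧ N ≤ t ∧ ω t = u ∧ ω (t+1) = u'

noncomputable def aux_phi (u u' : V) (p : ℝ) (N j n : ℕ) (ω : ℕ → V) : ℝ :=
  if aux_dead u u' N n ω then 0 else (1-p)^(j - aux_occ u N n ω)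

lemma aux_occ_congr (u : V) (N n : ℕ) (ω ω' : ℕ → V) (h : ∀ i < n, ω i = ω' i) :
    aux_occ u N n ω = aux_occ u N n ω' := by
  unfold aux_occ
  congr 1
  apply Finset.filter_congr
  intro t ht
  rw [h t (Finset.mem_range.mp ht)]

lemma aux_dead_congr (u u' : V) (N n : ℕ) (ω ω' : ℕ → V) (h : ∀ i ≤ n, ω i = ω' i) :
    aux_dead u u' N n ω ↔ aux_dead u u' N n ω' := by
  unfold aux_dead
  constructor <;> rintro ⟨t, ht, hNt, h1, h2⟩ <;> refine ⟨t, ht, hNt, ?_, ?_⟩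
  · rw [← h t (le_of_lt ht)]; exact h1
  · rw [← h (t+1) ht]; exact h2
  · rw [h t (le_of_lt ht)]; exact h1
  · rw [h (t+1) ht]; exact h2

lemma aux_occ_succ (u : V) (N n : ℕ) (ω : ℕ → V) :
    aux_occ u N (n+1) ω = aux_occ u N n ω + (if N ≤ n ∧ ω n = u then 1 else 0) := by
  unfold aux_occ
  rw [Finset.range_add_one, Finset.filter_insert]
  split_ifs with h
  · rw [Finset.card_insert_of_notMem, add_comm]
    intro hmem
    exact absurd (Finset.mem_range.mp (Finset.mem_of_mem_filter n hmem)) (lt_irrefl n)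
  · rw [add_zero]

lemma aux_dead_succ (u u' : V) (N n : ℕ) (ω : ℕ → V) :
    aux_dead u u' N (n+1) ω ↔ aux_dead u u' N n ω ∨ (N ≤ n ∧ ω n = u ∧ ω (n+1) = u') := by
  unfold aux_dead
  constructor
  · rintro ⟨t, ht, hNt, h1, h2⟩
    rcases Nat.lt_succ_iff_lt_or_eq.mp ht with ht' | rfl
    · exact Or.inl ⟨t, ht', hNt, h1, h2⟩
    · exact Or.inr ⟨hNt, h1, h2⟩
  · rintro (⟨t, ht, hNt, h1, h2⟩ | ⟨hNn, h1, h2⟩)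
    · exact ⟨t, Nat.lt_succ_of_lt ht, hNt, h1, h2⟩
    · exact ⟨n, Nat.lt_succ_self n, hNn, h1, h2⟩

lemma aux_occ_mono (u : V) (N : ℕ) (ω : ℕ → V) {n m : ℕ} (h : n ≤ m) :
    aux_occ u N n ω ≤ aux_occ u N m ω :=
  Finset.card_le_card (Finset.filter_subset_filter _ (Finset.range_subset_range.mpr h))

lemma aux_phi_nonneg (u u' : V) (p : ℝ) (hp1 : p ≤ 1) (N j n : ℕ) (ω : ℕ → V) :
    0 ≤ aux_phi u u' p N j n ω := by
  unfold aux_phi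
  split_ifs
  · exact le_refl 0
  · exact pow_nonneg (by linarith) _

lemma aux_phi_le_one (u u' : V) (p : ℝ) (hp : 0 ≤ p) (hp1 : p ≤ 1) (N j n : ℕ) (ω : ℕ → V) :
    aux_phi u u' p N j n ω ≤ 1 := by
  unfold aux_phi
  split_ifs
  · norm_num
  · exact pow_le_one₀ (by linarith) (by linarith)

lemma aux_ext_snoc_agree (n : ℕ) (w : Fin (n+1) → V) (b : V) (i : ℕ) (hi : i ≤ n) :
    aux_ext (n+1) (Fin.snoc w b) i = aux_ext n w i := by
  rw [aux_ext_eq (n+1) _ i (le_trans hi (Nat.le_succ n)), aux_ext_eq n w i hi]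
  have h1 : (⟨i, Nat.lt_succ_of_le (le_trans hi (Nat.le_succ n))⟩ : Fin (n+2))
      = Fin.castSucc ⟨i, Nat.lt_succ_of_le hi⟩ := by
    apply Fin.ext; rfl
  rw [h1, Fin.snoc_castSucc]

lemma aux_ext_snoc_last (n : ℕ) (w : Fin (n+1) → V) (b : V) :
    aux_ext (n+1) (Fin.snoc w b) (n+1) = b := by
  rw [aux_ext_eq (n+1) _ (n+1) le_rfl]
  have h1 : (⟨n+1, Nat.lt_succ_of_le le_rfl⟩ : Fin (n+2)) = Fin.last (n+1) := by
    apply Fin.ext; rfl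
  rw [h1, Fin.snoc_last]

/-- the equivalence between words of length `n+2` and pairs -/
def aux_snocEquiv (n : ℕ) : ((Fin (n+1) → V) × V) ≃ (Fin (n+2) → V) where
  toFun p := Fin.snoc p.1 p.2
  invFun w := (Fin.init w, w (Fin.last (n+1)))
  left_inv p := by simp [Fin.init_snoc, Fin.snoc_last]
  right_inv w := by simp [Fin.snoc_init_self]

lemma aux_sum_snoc (n : ℕ) (F : (Fin (n+2) → V) → ℝ) :
    ∑ w' : Fin (n+2) → V, F w' = ∑ w : Fin (n+1) → V, ∑ b : V, F (Fin.snoc w b) := by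
  rw [← Equiv.sum_comp (aux_snocEquiv n) F, Fintype.sum_prod_type]
  rfl

/-- the potential function -/
noncomputable def aux_Psi (G : StochGame V) (σ1 : G.Strategy G.V1) (σ2 : G.Strategy G.V2)
    (v : V) (u u' : V) (p : ℝ) (N j : ℕ) (n : ℕ) : ℝ :=
  ∑ w : Fin (n+1) → V,
    G.prefixProb σ1 σ2 v n (aux_ext n w) * aux_phi u u' p N j n (aux_ext n w)

lemma aux_sum_step_phi (G : StochGame V) (σ1 : G.Strategy G.V1) (σ2 : G.Strategy G.V2)
    (u u' : V) (p : ℝ) (hp : 0 < p) (hp1 : p ≤ 1)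
    (hstep : ∀ h, p ≤ G.step σ1 σ2 h u u') (N j n : ℕ) (W : ℕ → V) :
    ∑ b : V, G.step σ1 σ2 (hist W n) (W n) b *
      (if (aux_dead u u' N n W ∨ (N ≤ n ∧ W n = u ∧ b = u')) then (0:ℝ)
        else (1-p)^(j - (aux_occ u N n W + if N ≤ n ∧ W n = u then 1 else 0)))
      ≤ aux_phi u u' p N j n W := by
  by_cases hd : aux_dead u u' N n W
  · simp only [hd, true_or, if_true, mul_zero, Finset.sum_const_zero]
    simp [aux_phi, hd]
  · by_cases hc : N ≤ n ∧ W n = u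
    · have hcond : ∀ b : V, (aux_dead u u' N n W ∨ (N ≤ n ∧ W n = u ∧ b = u')) ↔ b = u' := by
        intro b; simp [hd, hc.1, hc.2]
      set c' : ℝ := (1-p)^(j - (aux_occ u N n W + 1)) with hc'
      have hc'nonneg : 0 ≤ c' := pow_nonneg (by linarith) _
      set q : ℝ := G.step σ1 σ2 (hist W n) (W n) u' with hq
      have hpq : p ≤ q := by rw [hq, hc.2]; exact hstep _
      have hq1 : q ≤ 1 := aux_step_le_one G σ1 σ2 _ _ _
      have hsum : ∑ b : V, G.step σ1 σ2 (hist W n) (W n) b *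
          (if (aux_dead u u' N n W ∨ (N ≤ n ∧ W n = u ∧ b = u')) then (0:ℝ)
            else (1-p)^(j - (aux_occ u N n W + if N ≤ n ∧ W n = u then 1 else 0)))
          = (1 - q) * c' := by
        have heach : ∀ b : V, G.step σ1 σ2 (hist W n) (W n) b *
            (if (aux_dead u u' N n W ∨ (N ≤ n ∧ W n = u ∧ b = u')) then (0:ℝ)
              else (1-p)^(j - (aux_occ u N n W + if N ≤ n ∧ W n = u then 1 else 0)))
            = G.step σ1 σ2 (hist W n) (W n) b * c'
              - (if b = u' then G.step σ1 σ2 (hist W n) (W n) b * c' else 0) := by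
          intro b
          rw [if_congr (hcond b) rfl rfl, if_pos hc]
          by_cases hb : b = u' <;> simp [hb, hc']
        rw [Finset.sum_congr rfl (fun b _ => heach b), Finset.sum_sub_distrib,
          ← Finset.sum_mul, aux_step_sum, Finset.sum_ite_eq' Finset.univ u'
            (fun b => G.step σ1 σ2 (hist W n) (W n) b * c'), if_pos (Finset.mem_univ u')]
        ring
      rw [hsum]
      have hphi : aux_phi u u' p N j n W = (1-p)^(j - aux_occ u N n W) := by
        simp [aux_phi, hd]
      rw [hphi]
      rcases lt_or_ge (aux_occ u N n W) j with hlt | hge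
      · have hij : j - aux_occ u N n W = (j - (aux_occ u N n W + 1)) + 1 := by omega
        rw [hij, pow_succ]
        calc (1 - q) * c' ≤ (1-p) * c' :=
              mul_le_mul_of_nonneg_right (by linarith) hc'nonneg
          _ = c' * (1-p) := by ring
      · have h1 : j - aux_occ u N n W = 0 := by omega
        have h2 : j - (aux_occ u N n W + 1) = 0 := by omega
        rw [h1, pow_zero]
        rw [hc', h2, pow_zero, mul_one]
        linarith
    · have hcond : ∀ b : V, ¬(aux_dead u u' N n W ∨ (N ≤ n ∧ W n = u ∧ b = u')) := by
        intro b
        rintro (h | h)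
        · exact hd h
        · exact hc ⟨h.1, h.2.1⟩
      have : ∀ b : V, G.step σ1 σ2 (hist W n) (W n) b *
          (if (aux_dead u u' N n W ∨ (N ≤ n ∧ W n = u ∧ b = u')) then (0:ℝ)
            else (1-p)^(j - (aux_occ u N n W + if N ≤ n ∧ W n = u then 1 else 0)))
          = G.step σ1 σ2 (hist W n) (W n) b * (1-p)^(j - aux_occ u N n W) := by
        intro b
        rw [if_neg (hcond b), if_neg hc, add_zero]
      rw [Finset.sum_congr rfl (fun b _ => this b), ← Finset.sum_mul, aux_step_sum, one_mul]
      simp [aux_phi, hd]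

lemma aux_Psi_succ_le (G : StochGame V) (σ1 : G.Strategy G.V1) (σ2 : G.Strategy G.V2)
    (v : V) (u u' : V) (p : ℝ) (hp : 0 < p) (hp1 : p ≤ 1)
    (hstep : ∀ h, p ≤ G.step σ1 σ2 h u u') (N j n : ℕ) :
    aux_Psi G σ1 σ2 v u u' p N j (n+1) ≤ aux_Psi G σ1 σ2 v u u' p N j n := by
  unfold aux_Psi
  rw [aux_sum_snoc n (fun w' => G.prefixProb σ1 σ2 v (n+1) (aux_ext (n+1) w')
    * aux_phi u u' p N j (n+1) (aux_ext (n+1) w'))]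
  apply Finset.sum_le_sum
  intro w _
  set W := aux_ext n w with hW
  have hterm : ∀ b : V,
      G.prefixProb σ1 σ2 v (n+1) (aux_ext (n+1) (Fin.snoc w b))
        * aux_phi u u' p N j (n+1) (aux_ext (n+1) (Fin.snoc w b))
      = G.prefixProb σ1 σ2 v n W * (G.step σ1 σ2 (hist W n) (W n) b *
        (if (aux_dead u u' N n W ∨ (N ≤ n ∧ W n = u ∧ b = u')) then (0:ℝ)
          else (1-p)^(j - (aux_occ u N n W + if N ≤ n ∧ W n = u then 1 else 0)))) := by
    intro b
    set W' := aux_ext (n+1) (Fin.snoc w b) with hW'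
    have hag : ∀ i ≤ n, W' i = W i := fun i hi => aux_ext_snoc_agree n w b i hi
    have hlast : W' (n+1) = b := aux_ext_snoc_last n w b
    have h1 : G.prefixProb σ1 σ2 v (n+1) W'
        = G.prefixProb σ1 σ2 v n W * G.step σ1 σ2 (hist W n) (W n) b := by
      rw [aux_prefixProb_succ, aux_prefixProb_congr G σ1 σ2 v n W' W hag,
        aux_hist_congr W' W n (fun i hi => hag i (le_of_lt hi)), hag n le_rfl, hlast]
    have h2 : aux_phi u u' p N j (n+1) W'
        = (if (aux_dead u u' N n W ∨ (N ≤ n ∧ W n = u ∧ b = u')) then (0:ℝ)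
            else (1-p)^(j - (aux_occ u N n W + if N ≤ n ∧ W n = u then 1 else 0))) := by
      have hdead' : aux_dead u u' N (n+1) W' ↔
          (aux_dead u u' N n W ∨ (N ≤ n ∧ W n = u ∧ b = u')) := by
        rw [aux_dead_succ, aux_dead_congr u u' N n W' W hag, hag n le_rfl, hlast]
      have hocc' : aux_occ u N (n+1) W'
          = aux_occ u N n W + (if N ≤ n ∧ W n = u then 1 else 0) := by
        rw [aux_occ_succ, aux_occ_congr u N n W' W (fun i hi => hag i (le_of_lt hi)),
          hag n le_rfl]
      unfold aux_phi
      simp only [hdead', hocc']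
    rw [h1, h2, mul_assoc]
  rw [Finset.sum_congr rfl (fun b _ => hterm b), ← Finset.mul_sum]
  calc G.prefixProb σ1 σ2 v n W * ∑ b : V, (G.step σ1 σ2 (hist W n) (W n) b *
        (if (aux_dead u u' N n W ∨ (N ≤ n ∧ W n = u ∧ b = u')) then (0:ℝ)
          else (1-p)^(j - (aux_occ u N n W + if N ≤ n ∧ W n = u then 1 else 0))))
      ≤ G.prefixProb σ1 σ2 v n W * aux_phi u u' p N j n W :=
        mul_le_mul_of_nonneg_left (aux_sum_step_phi G σ1 σ2 u u' p hp hp1 hstep N j n W)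
          (aux_prefixProb_nonneg G σ1 σ2 v n W)
    _ = _ := rfl

lemma aux_Psi_zero (G : StochGame V) (σ1 : G.Strategy G.V1) (σ2 : G.Strategy G.V2)
    (v : V) (u u' : V) (p : ℝ) (N j : ℕ) :
    aux_Psi G σ1 σ2 v u u' p N j 0 = (1-p)^j := by
  unfold aux_Psi
  have hterm : ∀ w : Fin 1 → V,
      G.prefixProb σ1 σ2 v 0 (aux_ext 0 w) * aux_phi u u' p N j 0 (aux_ext 0 w)
      = (if w ⟨0, Nat.lt_succ_of_le le_rfl⟩ = v then (1:ℝ) else 0) * (1-p)^j := by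
    intro w
    have h1 : G.prefixProb σ1 σ2 v 0 (aux_ext 0 w)
        = (if w ⟨0, Nat.lt_succ_of_le le_rfl⟩ = v then (1:ℝ) else 0) := by
      unfold StochGame.prefixProb
      rw [Finset.prod_range_zero, mul_one, aux_ext_eq 0 w 0 le_rfl]
    have h2 : aux_phi u u' p N j 0 (aux_ext 0 w) = (1-p)^j := by
      unfold aux_phi
      rw [if_neg, aux_occ, Finset.range_zero, Finset.filter_empty, Finset.card_empty,
        Nat.sub_zero]
      rintro ⟨t, ht, -⟩
      exact Nat.not_lt_zero t ht
    rw [h1, h2]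
  rw [Finset.sum_congr rfl (fun w _ => hterm w)]
  have heq : ∑ w : Fin 1 → V, ((if w ⟨0, Nat.lt_succ_of_le le_rfl⟩ = v then (1:ℝ) else 0) * (1-p)^j)
      = ∑ x : V, ((if x = v then (1:ℝ) else 0) * (1-p)^j) :=
    Fintype.sum_equiv (Equiv.funUnique (Fin 1) V) _ _
      (fun w => by
        have hx : (Equiv.funUnique (Fin 1) V) w = w ⟨0, Nat.lt_succ_of_le le_rfl⟩ :=
          congrArg w (Subsingleton.elim _ _)
        rw [hx])
  rw [heq]
  simp

lemma aux_Psi_le (G : StochGame V) (σ1 : G.Strategy G.V1) (σ2 : G.Strategy G.V2)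
    (v : V) (u u' : V) (p : ℝ) (hp : 0 < p) (hp1 : p ≤ 1)
    (hstep : ∀ h, p ≤ G.step σ1 σ2 h u u') (N j n : ℕ) :
    aux_Psi G σ1 σ2 v u u' p N j n ≤ (1-p)^j := by
  induction n with
  | zero => rw [aux_Psi_zero]
  | succ n ih => exact le_trans (aux_Psi_succ_le G σ1 σ2 v u u' p hp hp1 hstep N j n) ih

section BCMeas

variable [MeasurableSpace V] [DiscreteMeasurableSpace V]

lemma aux_Bset_hR (u u' : V) (N j n : ℕ) :
    ∀ (ω ω' : ℕ → V), (∀ i ≤ n, ω i = ω' i) →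
      (¬ aux_dead u u' N n ω ∧ j ≤ aux_occ u N n ω) →
      (¬ aux_dead u u' N n ω' ∧ j ≤ aux_occ u N n ω') := by
  rintro ω ω' hag ⟨h1, h2⟩
  constructor
  · rw [← aux_dead_congr u u' N n ω ω' hag]; exact h1
  · rw [← aux_occ_congr u N n ω ω' (fun i hi => hag i (le_of_lt hi))]; exact h2

lemma aux_sum_filter_le {α : Type*} (S : Finset α) (P : α → Prop) (inst : DecidablePred P)
    (f g : α → ℝ) (hfg : ∀ a ∈ S, P a → f a = g a) (hg : ∀ a ∈ S, 0 ≤ g a) :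
    ∑ a ∈ @Finset.filter α P inst S, f a ≤ ∑ a ∈ S, g a := by
  calc ∑ a ∈ @Finset.filter α P inst S, f a = ∑ a ∈ @Finset.filter α P inst S, g a := by
        apply Finset.sum_congr rfl
        intro a ha
        rw [Finset.mem_filter] at ha
        exact hfg a ha.1 ha.2
    _ ≤ ∑ a ∈ S, g a :=
        Finset.sum_le_sum_of_subset_of_nonneg (Finset.filter_subset _ _)
          (fun a ha _ => hg a ha)

lemma aux_Bset_bound (G : StochGame V) (σ1 : G.Strategy G.V1) (σ2 : G.Strategy G.V2)
    (v : V) (μ : Measure (ℕ → V)) (hμ : G.IsPathMeasure σ1 σ2 v μ)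
    (u u' : V) (p : ℝ) (hp : 0 < p) (hp1 : p ≤ 1)
    (hstep : ∀ h, p ≤ G.step σ1 σ2 h u u') (N j n : ℕ) :
    μ {ω | ¬ aux_dead u u' N n ω ∧ j ≤ aux_occ u N n ω} ≤ ENNReal.ofReal ((1-p)^j) := by
  rw [aux_measure_coordDet G σ1 σ2 v μ hμ n _ (aux_Bset_hR u u' N j n)]
  rw [← ENNReal.ofReal_sum_of_nonneg (fun w _ => aux_prefixProb_nonneg G σ1 σ2 v n _)]
  apply ENNReal.ofReal_le_ofReal
  have h1 : ∀ w : Fin (n+1) → V,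
      (¬ aux_dead u u' N n (aux_ext n w) ∧ j ≤ aux_occ u N n (aux_ext n w)) →
      G.prefixProb σ1 σ2 v n (aux_ext n w)
        = G.prefixProb σ1 σ2 v n (aux_ext n w) * aux_phi u u' p N j n (aux_ext n w) := by
    intro w hw
    have : aux_phi u u' p N j n (aux_ext n w) = 1 := by
      unfold aux_phi
      rw [if_neg hw.1, Nat.sub_eq_zero_of_le hw.2, pow_zero]
    rw [this, mul_one]
  refine le_trans (aux_sum_filter_le Finset.univ _ _ _
      (fun w : Fin (n+1) → V => G.prefixProb σ1 σ2 v n (aux_ext n w)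
        * aux_phi u u' p N j n (aux_ext n w))
      (fun w _ hw => h1 w hw)
      (fun w _ => mul_nonneg (aux_prefixProb_nonneg G σ1 σ2 v n _)
        (aux_phi_nonneg u u' p hp1 N j n _)))
    (aux_Psi_le G σ1 σ2 v u u' p hp hp1 hstep N j n)

lemma aux_occ_exists (u : V) (N : ℕ) (ω : ℕ → V) (hinf : u ∈ infOcc ω) :
    ∀ j, ∃ n, j ≤ aux_occ u N n ω := by
  intro j
  induction j with
  | zero => exact ⟨0, Nat.zero_le _⟩
  | succ j ih =>
    obtain ⟨n, hn⟩ := ih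
    obtain ⟨t, ht, htu⟩ := hinf (max n N)
    refine ⟨t+1, ?_⟩
    have hsub : insert t ((Finset.range n).filter (fun s => N ≤ s ∧ ω s = u))
        ⊆ (Finset.range (t+1)).filter (fun s => N ≤ s ∧ ω s = u) := by
      intro x hx
      rcases Finset.mem_insert.mp hx with rfl | hx
      · exact Finset.mem_filter.mpr ⟨Finset.mem_range.mpr (Nat.lt_succ_self _),
          le_trans (le_max_right n N) ht, htu⟩
      · rw [Finset.mem_filter] at hx ⊢
        exact ⟨Finset.mem_range.mpr (lt_of_lt_of_le (Finset.mem_range.mp hx.1)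
          (le_trans (le_max_left n N) (le_trans ht (Nat.le_succ t)))), hx.2⟩
    have hnotmem : t ∉ (Finset.range n).filter (fun s => N ≤ s ∧ ω s = u) := by
      intro hmem
      exact absurd (Finset.mem_range.mp (Finset.mem_of_mem_filter t hmem))
        (not_lt.mpr (le_trans (le_max_left n N) ht))
    calc j + 1 ≤ aux_occ u N n ω + 1 := by omega
      _ = (insert t ((Finset.range n).filter (fun s => N ≤ s ∧ ω s = u))).card := by
          rw [Finset.card_insert_of_notMem hnotmem]; rfl
      _ ≤ aux_occ u N (t+1) ω := Finset.card_le_card hsub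

lemma aux_badN_zero (G : StochGame V) (σ1 : G.Strategy G.V1) (σ2 : G.Strategy G.V2)
    (v : V) (μ : Measure (ℕ → V)) (hμ : G.IsPathMeasure σ1 σ2 v μ)
    (u u' : V) (p : ℝ) (hp : 0 < p) (hp1 : p ≤ 1)
    (hstep : ∀ h, p ≤ G.step σ1 σ2 h u u') (N : ℕ) :
    μ {ω | u ∈ infOcc ω ∧ ∀ t, N ≤ t → ω t = u → ω (t+1) ≠ u'} = 0 := by
  set bad := {ω : ℕ → V | u ∈ infOcc ω ∧ ∀ t, N ≤ t → ω t = u → ω (t+1) ≠ u'} with hbad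
  have hbnd : ∀ j : ℕ, μ bad ≤ ENNReal.ofReal ((1-p)^j) := by
    intro j
    set C : ℕ → Set (ℕ → V) := fun n =>
      ⋂ (m : ℕ), ⋂ (_ : n ≤ m), {ω | ¬ aux_dead u u' N m ω ∧ j ≤ aux_occ u N m ω} with hC
    have hCmeas : ∀ n, MeasurableSet (C n) := fun n =>
      MeasurableSet.iInter (fun m => MeasurableSet.iInter (fun _ =>
        aux_meas_coordDet m _ (aux_Bset_hR u u' N j m)))
    have hCmono : Monotone C := by
      intro n n' hnn' ω hω
      simp only [hC, Set.mem_iInter] at hω ⊢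
      intro m hm
      exact hω m (le_trans hnn' hm)
    have hsub : bad ⊆ ⋃ n, C n := by
      rintro ω ⟨hinf, hnever⟩
      obtain ⟨n, hn⟩ := aux_occ_exists u N ω hinf j
      refine Set.mem_iUnion.mpr ⟨n, ?_⟩
      simp only [hC, Set.mem_iInter]
      intro m hm
      constructor
      · rintro ⟨t, ht, hNt, h1, h2⟩
        exact hnever t hNt h1 h2
      · exact le_trans hn (aux_occ_mono u N ω hm)
    calc μ bad ≤ μ (⋃ n, C n) := measure_mono hsub
      _ = ⨆ n, μ (C n) := Directed.measure_iUnion (hCmono.directed_le)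
      _ ≤ ENNReal.ofReal ((1-p)^j) := by
          apply iSup_le
          intro n
          calc μ (C n) ≤ μ {ω | ¬ aux_dead u u' N n ω ∧ j ≤ aux_occ u N n ω} := by
                apply measure_mono
                intro ω hω
                simp only [hC, Set.mem_iInter] at hω
                exact hω n le_rfl
            _ ≤ _ := aux_Bset_bound G σ1 σ2 v μ hμ u u' p hp hp1 hstep N j n
  have htend : Filter.Tendsto (fun j : ℕ => ENNReal.ofReal ((1-p)^j)) Filter.atTop (nhds 0) := by
    have h0 : Filter.Tendsto (fun j : ℕ => (1-p)^j) Filter.atTop (nhds 0) :=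
      tendsto_pow_atTop_nhds_zero_of_lt_one (by linarith) (by linarith)
    have := ENNReal.tendsto_ofReal h0
    rwa [ENNReal.ofReal_zero] at this
  exact le_antisymm (ge_of_tendsto htend (Filter.Eventually.of_forall hbnd)) (zero_le)

lemma aux_bc (G : StochGame V) (σ1 : G.Strategy G.V1) (σ2 : G.Strategy G.V2)
    (v : V) (μ : Measure (ℕ → V)) (hμ : G.IsPathMeasure σ1 σ2 v μ)
    (u u' : V) (p : ℝ) (hp : 0 < p)
    (hstep : ∀ h, p ≤ G.step σ1 σ2 h u u') :
    μ {ω | u ∈ infOcc ω ∧ u' ∉ infOcc ω} = 0 := by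
  have hp1 : p ≤ 1 := le_trans (hstep []) (aux_step_le_one G σ1 σ2 [] u u')
  have hsub : {ω : ℕ → V | u ∈ infOcc ω ∧ u' ∉ infOcc ω}
      ⊆ ⋃ N : ℕ, {ω : ℕ → V | u ∈ infOcc ω ∧ ∀ t, N ≤ t → ω t = u → ω (t+1) ≠ u'} := by
    rintro ω ⟨h1, h2⟩
    simp only [StochGame.infOcc, Set.mem_setOf_eq] at h2
    push_neg at h2
    obtain ⟨N, hN⟩ := h2
    refine Set.mem_iUnion.mpr ⟨N, h1, ?_⟩
    intro t hNt _ hcon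
    exact hN (t+1) (by omega) hcon
  refine le_antisymm ?_ (zero_le)
  calc μ _ ≤ μ (⋃ N : ℕ, {ω : ℕ → V | u ∈ infOcc ω ∧ ∀ t, N ≤ t → ω t = u → ω (t+1) ≠ u'}) :=
        measure_mono hsub
    _ ≤ ∑' N : ℕ, μ {ω : ℕ → V | u ∈ infOcc ω ∧ ∀ t, N ≤ t → ω t = u → ω (t+1) ≠ u'} :=
        measure_iUnion_le _
    _ = 0 := by
        rw [ENNReal.tsum_eq_zero]
        intro N
        exact aux_badN_zero G σ1 σ2 v μ hμ u u' p hp hp1 hstep N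

lemma aux_infOcc_meas (x : V) : MeasurableSet {ω : ℕ → V | x ∈ infOcc ω} := by
  have heq : {ω : ℕ → V | x ∈ infOcc ω}
      = ⋂ (N : ℕ), ⋃ (n : ℕ), {ω : ℕ → V | N ≤ n ∧ ω n = x} := by
    ext ω
    simp [StochGame.infOcc]
  rw [heq]
  apply MeasurableSet.iInter
  intro N
  apply MeasurableSet.iUnion
  intro n
  by_cases hNn : N ≤ n
  · simp only [hNn, true_and]
    show MeasurableSet ((fun ω : ℕ → V => ω n) ⁻¹' {x})
    exact (measurable_pi_apply n) (MeasurableSet.singleton x)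
  · simp only [hNn, false_and, Set.setOf_false]
    exact MeasurableSet.empty

lemma aux_ReachT_meas (G : StochGame V) : MeasurableSet G.ReachT := by
  have heq : G.ReachT = ⋃ (i : ℕ), (fun ω : ℕ → V => ω i) ⁻¹' {x | G.Terminal x} := by
    ext ω
    simp [StochGame.ReachT]
  rw [heq]
  exact MeasurableSet.iUnion (fun i =>
    (measurable_pi_apply i) (MeasurableSet.of_discrete))

lemma aux_FP2_meas (G : StochGame V) : MeasurableSet G.FP2 := by
  have heq : G.FP2 = ⋂ (u : V), ⋂ (y : V),
      {ω : ℕ → V | (u ∈ G.V2 ∧ y ∈ G.post u) → (u ∈ infOcc ω → y ∈ infOcc ω)} := by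
    ext ω
    simp only [StochGame.FP2, Set.mem_setOf_eq, Set.mem_iInter]
    constructor
    · intro h u y hc hinf
      exact h u hc.1 hinf y hc.2
    · intro h u hu hinf y hy
      exact h u y ⟨hu, hy⟩ hinf
  rw [heq]
  apply MeasurableSet.iInter
  intro u
  apply MeasurableSet.iInter
  intro y
  by_cases hc : u ∈ G.V2 ∧ y ∈ G.post u
  · have heq2 : {ω : ℕ → V | (u ∈ G.V2 ∧ y ∈ G.post u) → (u ∈ infOcc ω → y ∈ infOcc ω)}
        = {ω : ℕ → V | u ∈ infOcc ω}ᶜ ∪ {ω : ℕ → V | y ∈ infOcc ω} := by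
      ext ω
      by_cases hin : u ∈ infOcc ω <;> simp [hc, hin]
    rw [heq2]
    exact MeasurableSet.union (aux_infOcc_meas u).compl (aux_infOcc_meas y)
  · have heq2 : {ω : ℕ → V | (u ∈ G.V2 ∧ y ∈ G.post u) → (u ∈ infOcc ω → y ∈ infOcc ω)}
        = Set.univ := by
      ext ω
      simp [hc]
    rw [heq2]
    exact MeasurableSet.univ

/-- the memoryless deterministic strategy following `c` -/
def aux_dirac (G : StochGame V) (c : V → V) (hc : ∀ x, 0 < G.δ x (c x)) :
    G.Strategy G.V1 where
  f := fun _ x y => if y = c x then 1 else 0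
  nonneg := by intro h x y; split_ifs <;> norm_num
  sum_one := by intro h x; simp
  support := by
    intro h x _ y hy
    split_ifs at hy with h'
    · rw [h']; exact hc x
    · norm_num at hy

/-- the uniform memoryless Player 2 strategy -/
noncomputable def aux_unif (G : StochGame V) : G.Strategy G.V2 where
  f := fun _ x y => if 0 < G.δ x y
    then (((Finset.univ.filter (fun z => 0 < G.δ x z)).card : ℝ))⁻¹ else 0
  nonneg := by
    intro h x y
    split_ifs
    · positivity
    · exact le_refl 0
  sum_one := by
    intro h x
    rw [← Finset.sum_filter]
    rw [Finset.sum_const, nsmul_eq_mul]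
    apply mul_inv_cancel₀
    rw [Nat.cast_ne_zero]
    obtain ⟨y, hy⟩ := G.post_nonempty x
    exact Finset.card_ne_zero_of_mem (Finset.mem_filter.mpr ⟨Finset.mem_univ y, hy⟩)
  support := by
    intro h x _ y hy
    by_contra hne
    rw [if_neg hne] at hy
    exact lt_irrefl 0 hy

lemma aux_unif_card_pos (G : StochGame V) (x : V) :
    0 < ((Finset.univ.filter (fun z => 0 < G.δ x z)).card : ℝ) := by
  obtain ⟨y, hy⟩ := G.post_nonempty x
  have : 0 < (Finset.univ.filter (fun z => 0 < G.δ x z)).card :=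
    Finset.card_pos.mpr ⟨y, Finset.mem_filter.mpr ⟨Finset.mem_univ y, hy⟩⟩
  exact_mod_cast this

lemma aux_union_null (μ : Measure (ℕ → V)) (s : V → V → Set (ℕ → V))
    (hs : ∀ u y, μ (s u y) = 0) : μ (⋃ (u : V), ⋃ (y : V), s u y) = 0 := by
  refine le_antisymm ?_ (zero_le)
  calc μ (⋃ (u : V), ⋃ (y : V), s u y) ≤ ∑' (u : V), μ (⋃ (y : V), s u y) :=
        measure_iUnion_le _
    _ ≤ ∑' (u : V), ∑' (y : V), μ (s u y) :=
        ENNReal.tsum_le_tsum (fun u => measure_iUnion_le _)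
    _ = 0 := by simp [hs]

lemma aux_unif_fair (G : StochGame V) : G.Fair (aux_unif G) := by
  intro σ1 v0 μ0 hμ0
  haveI : IsProbabilityMeasure μ0 := hμ0.1
  have hcompl : μ0 G.FP2ᶜ = 0 := by
    have hsub : G.FP2ᶜ ⊆ ⋃ (u : V), ⋃ (y : V),
        (if (u ∈ G.V2 ∧ 0 < G.δ u y)
          then {ω : ℕ → V | u ∈ infOcc ω ∧ y ∉ infOcc ω} else ∅) := by
      intro ω hω
      simp only [StochGame.FP2, Set.mem_compl_iff, Set.mem_setOf_eq] at hω
      push_neg at hω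
      obtain ⟨u, hu2, huinf, y, hy, hynot⟩ := hω
      refine Set.mem_iUnion.mpr ⟨u, Set.mem_iUnion.mpr ⟨y, ?_⟩⟩
      rw [if_pos ⟨hu2, hy⟩]
      exact ⟨huinf, hynot⟩
    have hnull : μ0 (⋃ (u : V), ⋃ (y : V),
        (if (u ∈ G.V2 ∧ 0 < G.δ u y)
          then {ω : ℕ → V | u ∈ infOcc ω ∧ y ∉ infOcc ω} else ∅)) = 0 := by
      apply aux_union_null
      intro u y
      by_cases hc : u ∈ G.V2 ∧ 0 < G.δ u y
      · rw [if_pos hc]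
        apply aux_bc G σ1 (aux_unif G) v0 μ0 hμ0 u y
          (((Finset.univ.filter (fun z => 0 < G.δ u z)).card : ℝ))⁻¹
          (inv_pos.mpr (aux_unif_card_pos G u))
        intro h
        have hu1 : u ∉ G.V1 := fun h1 => G.disj12 u ⟨h1, hc.1⟩
        unfold StochGame.step
        rw [if_neg hu1, if_pos hc.1]
        have hfval : (aux_unif G).f h u y
            = (((Finset.univ.filter (fun z => 0 < G.δ u z)).card : ℝ))⁻¹ := by
          unfold aux_unif
          dsimp only
          rw [if_pos hc.2]
        rw [hfval]
      · rw [if_neg hc]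
        exact measure_empty
    exact le_antisymm (le_trans (measure_mono hsub) (le_of_eq hnull)) (zero_le)
  have h1 : μ0 G.FP2ᶜ = 1 - μ0 G.FP2 := by
    rw [measure_compl (aux_FP2_meas G) (measure_ne_top μ0 _), measure_univ]
  have h2 : 1 ≤ μ0 G.FP2 := tsub_eq_zero_iff_le.mp (h1 ▸ hcompl)
  exact le_antisymm prob_le_one h2

lemma aux_cons_null (G : StochGame V) (σ1 : G.Strategy G.V1) (σ2 : G.Strategy G.V2)
    (v : V) (μ : Measure (ℕ → V)) (hμ : G.IsPathMeasure σ1 σ2 v μ) :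
    μ {ω : ℕ → V | ∃ t, ¬ 0 < G.δ (ω t) (ω (t+1))} = 0 := by
  have hsub : {ω : ℕ → V | ∃ t, ¬ 0 < G.δ (ω t) (ω (t+1))}
      ⊆ ⋃ (t : ℕ), {ω : ℕ → V | ¬ 0 < G.δ (ω t) (ω (t+1))} := by
    rintro ω ⟨t, ht⟩
    exact Set.mem_iUnion.mpr ⟨t, ht⟩
  have hzero : ∀ t : ℕ, μ {ω : ℕ → V | ¬ 0 < G.δ (ω t) (ω (t+1))} = 0 := by
    intro t
    apply aux_measure_coordDet_zero G σ1 σ2 v μ hμ (t+1)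
      (fun ω => ¬ 0 < G.δ (ω t) (ω (t+1)))
    · intro ω ω' hag hω
      rw [← hag t (Nat.le_succ t), ← hag (t+1) le_rfl]
      exact hω
    · intro w hw
      unfold StochGame.prefixProb
      apply mul_eq_zero_of_right
      apply Finset.prod_eq_zero (Finset.mem_range.mpr (Nat.lt_succ_self t))
      exact aux_step_zero G σ1 σ2 _ _ _ hw
  refine le_antisymm (le_trans (measure_mono hsub)
    (le_trans (measure_iUnion_le _) (le_of_eq ?_))) (zero_le)
  rw [ENNReal.tsum_eq_zero]
  exact hzero

lemma aux_init_null (G : StochGame V) (σ1 : G.Strategy G.V1) (σ2 : G.Strategy G.V2)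
    (v : V) (μ : Measure (ℕ → V)) (hμ : G.IsPathMeasure σ1 σ2 v μ) :
    μ {ω : ℕ → V | ω 0 ≠ v} = 0 := by
  apply aux_measure_coordDet_zero G σ1 σ2 v μ hμ 0 (fun ω => ω 0 ≠ v)
  · intro ω ω' hag hω
    rw [← hag 0 le_rfl]
    exact hω
  · intro w hw
    unfold StochGame.prefixProb
    rw [if_neg hw, zero_mul]

lemma aux_infOcc_infinite (ω : ℕ → V) (x : V) :
    x ∈ infOcc ω ↔ {t | ω t = x}.Infinite := by
  constructor
  · intro h
    by_contra hfin
    rw [Set.not_infinite] at hfin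
    obtain ⟨N, hN⟩ := hfin.bddAbove
    obtain ⟨n, hn, hx⟩ := h (N+1)
    exact absurd (hN hx) (by omega)
  · intro h N
    obtain ⟨m, hm, hlt⟩ := h.exists_gt N
    exact ⟨m, le_of_lt hlt, hm⟩

lemma aux_exists_infOcc (ω : ℕ → V) : ∃ x, x ∈ infOcc ω := by
  have hinf : ∃ x : V, {t | ω t = x}.Infinite := by
    by_contra h
    push_neg at h
    have hsub : (Set.univ : Set ℕ) ⊆ ⋃ (x : V), {t | ω t = x} :=
      fun t _ => Set.mem_iUnion.mpr ⟨ω t, rfl⟩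
    exact Set.infinite_univ (Set.Finite.subset (Set.finite_iUnion h) hsub)
  obtain ⟨x, hx⟩ := hinf
  exact ⟨x, (aux_infOcc_infinite ω x).mpr hx⟩

lemma aux_succ_infOcc (ω : ℕ → V) (x : V) (hx : x ∈ infOcc ω) :
    ∃ y, y ∈ infOcc ω ∧ {t | ω t = x ∧ ω (t+1) = y}.Nonempty := by
  have hxinf : {t | ω t = x}.Infinite := (aux_infOcc_infinite ω x).mp hx
  have hex : ∃ y : V, {t | ω t = x ∧ ω (t+1) = y}.Infinite := by
    by_contra h
    push_neg at h
    have hsub : {t | ω t = x} ⊆ ⋃ (y : V), {t | ω t = x ∧ ω (t+1) = y} :=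
      fun t ht => Set.mem_iUnion.mpr ⟨ω (t+1), ht, rfl⟩
    exact hxinf (Set.Finite.subset (Set.finite_iUnion h) hsub)
  obtain ⟨y, hy⟩ := hex
  refine ⟨y, ?_, hy.nonempty⟩
  apply (aux_infOcc_infinite ω y).mpr
  have himg : (fun t => t + 1) '' {t | ω t = x ∧ ω (t+1) = y} ⊆ {t | ω t = y} := by
    rintro s ⟨t, ⟨_, ht2⟩, rfl⟩
    exact ht2
  exact Set.Infinite.mono himg (Set.Infinite.image
    (Set.injOn_of_injective (fun a b => by omega)) hy)

end BCMeas

end BC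

end Aux

open StochGame in
/-- If reaching the terminal set has probability `< 1` for some Player 1 strategy and some
fair Player 2 strategy, then this is witnessed by a memoryless deterministic Player 1
strategy together with some fair Player 2 strategy. -/
theorem exists_memoryless_deterministic_witness
    {V : Type*} [Fintype V] [DecidableEq V] [MeasurableSpace V] [DiscreteMeasurableSpace V]
    (G : StochGame V) (v : V)
    (σ1 : G.Strategy G.V1) (σ2 : G.Strategy G.V2) (hfair : G.Fair σ2)
    (μ : Measure (ℕ → V)) (hμ : G.IsPathMeasure σ1 σ2 v μ) (hlt : μ G.ReachT < 1) :
    ∃ (σ1' : G.Strategy G.V1) (σ2' : G.Strategy G.V2),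
      σ1'.Memoryless ∧ σ1'.Deterministic ∧ G.Fair σ2' ∧
      ∀ μ' : Measure (ℕ → V), G.IsPathMeasure σ1' σ2' v μ' → μ' G.ReachT < 1 := by
  classical
  haveI hprob : IsProbabilityMeasure μ := hμ.1
  -- the negligible sets
  set NulCons := {ω : ℕ → V | ∃ t, ¬ 0 < G.δ (ω t) (ω (t+1))} with hNulConsDef
  set NulInit := {ω : ℕ → V | ω 0 ≠ v} with hNulInitDef
  set NulVPC := ⋃ (u : V), ⋃ (y : V),
    (if (u ∈ G.VP ∧ 0 < G.δ u y)
      then {ω : ℕ → V | u ∈ infOcc ω ∧ y ∉ infOcc ω} else (∅ : Set (ℕ → V))) with hNulVPCDef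
  have hNulCons : μ NulCons = 0 := aux_cons_null G σ1 σ2 v μ hμ
  have hNulInit : μ NulInit = 0 := aux_init_null G σ1 σ2 v μ hμ
  have hNulVPC : μ NulVPC = 0 := by
    apply aux_union_null
    intro u y
    by_cases hc : u ∈ G.VP ∧ 0 < G.δ u y
    · rw [if_pos hc]
      apply aux_bc G σ1 σ2 v μ hμ u y (G.δ u y) hc.2
      intro h
      have hu1 : u ∉ G.V1 := fun h1 => G.disj1P u ⟨h1, hc.1⟩
      have hu2 : u ∉ G.V2 := fun h2 => G.disj2P u ⟨h2, hc.1⟩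
      unfold StochGame.step
      rw [if_neg hu1, if_neg hu2]
    · rw [if_neg hc]
      exact measure_empty
  have hFP2c : μ G.FP2ᶜ = 0 := by
    have h1 : μ G.FP2ᶜ = 1 - μ G.FP2 := by
      rw [measure_compl (aux_FP2_meas G) (measure_ne_top μ _), measure_univ]
    rw [h1, hfair σ1 v μ hμ, tsub_self]
  -- pick a good play ω₀
  have hbig : μ (G.ReachT ∪ (G.FP2ᶜ ∪ (NulCons ∪ (NulInit ∪ NulVPC)))) < 1 := by
    have hz : μ (G.FP2ᶜ ∪ (NulCons ∪ (NulInit ∪ NulVPC))) = 0 :=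
      measure_union_null hFP2c (measure_union_null hNulCons
        (measure_union_null hNulInit hNulVPC))
    calc μ (G.ReachT ∪ (G.FP2ᶜ ∪ (NulCons ∪ (NulInit ∪ NulVPC))))
        ≤ μ G.ReachT + μ (G.FP2ᶜ ∪ (NulCons ∪ (NulInit ∪ NulVPC))) := measure_union_le _ _
      _ = μ G.ReachT := by rw [hz, add_zero]
      _ < 1 := hlt
  have hex : ∃ ω₀ : ℕ → V, ω₀ ∉ G.ReachT ∪ (G.FP2ᶜ ∪ (NulCons ∪ (NulInit ∪ NulVPC))) := by
    by_contra hcon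
    push_neg at hcon
    have : G.ReachT ∪ (G.FP2ᶜ ∪ (NulCons ∪ (NulInit ∪ NulVPC))) = Set.univ :=
      Set.eq_univ_of_forall hcon
    rw [this, measure_univ] at hbig
    exact lt_irrefl 1 hbig
  obtain ⟨ω₀, hω₀⟩ := hex
  simp only [Set.mem_union, not_or] at hω₀
  obtain ⟨hT, hF, hCons, hInit, hVPC⟩ := hω₀
  have hterm : ∀ i, ¬ G.Terminal (ω₀ i) := fun i hi => hT ⟨i, hi⟩
  have hpost : ∀ t, 0 < G.δ (ω₀ t) (ω₀ (t+1)) := by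
    intro t
    by_contra h
    exact hCons ⟨t, h⟩
  have h0 : ω₀ 0 = v := not_not.mp hInit
  have hfairplay : ω₀ ∈ G.FP2 := Set.notMem_compl_iff.mp hF
  have hvpc : ∀ u y, u ∈ G.VP → 0 < G.δ u y → u ∈ infOcc ω₀ → y ∈ infOcc ω₀ := by
    intro u y hu hy hinf
    by_contra hny
    apply hVPC
    refine Set.mem_iUnion.mpr ⟨u, Set.mem_iUnion.mpr ⟨y, ?_⟩⟩
    rw [if_pos ⟨hu, hy⟩]
    exact ⟨hinf, hny⟩
  -- the end component S
  set S : Set V := infOcc ω₀ with hSdef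
  have hSsucc : ∀ x, x ∈ S → ∃ y, y ∈ S ∧ 0 < G.δ x y := by
    intro x hx
    obtain ⟨y, hyS, hne⟩ := aux_succ_infOcc ω₀ x hx
    obtain ⟨t, ht⟩ := hne
    simp only [Set.mem_setOf_eq] at ht
    obtain ⟨htx, hty⟩ := ht
    refine ⟨y, hyS, ?_⟩
    have := hpost t
    rw [htx, hty] at this
    exact this
  have hSclosed : ∀ x, x ∈ S → x ∉ G.V1 → ∀ y, 0 < G.δ x y → y ∈ S := by
    intro x hx hx1 y hy
    rcases G.cover x with h | h | h
    · exact absurd h hx1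
    · exact hfairplay x h hx y hy
    · exact hvpc x y h hy hx
  have hSne : ∃ x, x ∈ S := aux_exists_infOcc ω₀
  have hSterm : ∀ x, x ∈ S → ¬ G.Terminal x := by
    intro x hx
    have hx' : ∀ N, ∃ n, N ≤ n ∧ ω₀ n = x := hx
    obtain ⟨n, _, hn⟩ := hx' 0
    rw [← hn]
    exact hterm n
  have hmex : ∃ t, ω₀ t ∈ S := by
    obtain ⟨x, hx⟩ := hSne
    have hx' : ∀ N, ∃ n, N ≤ n ∧ ω₀ n = x := hx
    obtain ⟨n, _, hn⟩ := hx' 0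
    exact ⟨n, by rw [hn]; exact hx⟩
  set m := Nat.find hmex with hmdef
  have hmS : ω₀ m ∈ S := Nat.find_spec hmex
  have hmmin : ∀ t, t < m → ω₀ t ∉ S := fun t ht => Nat.find_min hmex ht
  -- the choice function
  set l : V → ℕ := fun x => Nat.findGreatest (fun t => t < m ∧ ω₀ t = x) m with hldef
  have hcdef : ∀ x : V, ∃ y, 0 < G.δ x y ∧ (x ∈ S → y ∈ S) ∧
      ((x ∉ S ∧ ∃ t, t < m ∧ ω₀ t = x) → y = ω₀ (l x + 1)) := by
    intro x
    by_cases hx : x ∈ S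
    · obtain ⟨y, hyS, hyd⟩ := hSsucc x hx
      exact ⟨y, hyd, fun _ => hyS, fun h => absurd hx h.1⟩
    · by_cases hocc : ∃ t, t < m ∧ ω₀ t = x
      · refine ⟨ω₀ (l x + 1), ?_, fun h => absurd h hx, fun _ => rfl⟩
        obtain ⟨t, htm, htx⟩ := hocc
        have hPl : l x < m ∧ ω₀ (l x) = x :=
          Nat.findGreatest_spec (P := fun t => t < m ∧ ω₀ t = x) (le_of_lt htm) ⟨htm, htx⟩
        have := hpost (l x)
        rw [hPl.2] at this
        exact this
      · obtain ⟨y, hy⟩ := G.post_nonempty x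
        exact ⟨y, hy, fun h => absurd h hx, fun h => absurd h.2 hocc⟩
  choose c hc1 hc2 hc3 using hcdef
  -- the strategies
  refine ⟨aux_dirac G c hc1, aux_unif G, fun h h' cur => rfl,
    fun h cur => ⟨c cur, fun u => by by_cases hu : u = c cur <;> simp [aux_dirac, hu]⟩,
    aux_unif_fair G, ?_⟩
  intro μ' hμ'
  haveI : IsProbabilityMeasure μ' := hμ'.1
  -- the path q reaching S
  set q : ℕ → V := fun j => c^[j] v with hqdef
  have hq0 : q 0 = v := rfl
  have hqs : ∀ j, q (j+1) = c (q j) := fun j => Function.iterate_succ_apply' c j v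
  have hinv : ∀ j, (∀ i, i ≤ j → q i ∉ S) → ∃ t, j ≤ t ∧ t < m ∧ ω₀ t = q j := by
    intro j
    induction j with
    | zero =>
      intro hno
      have hm0 : 0 < m := by
        rcases Nat.eq_zero_or_pos m with h0' | h0'
        · exfalso
          apply hno 0 le_rfl
          rw [hq0, ← h0]
          rw [h0'] at hmS
          exact hmS
        · exact h0'
      exact ⟨0, le_rfl, hm0, by rw [hq0, h0]⟩
    | succ j ih =>
      intro hno
      obtain ⟨t, hjt, htm, htq⟩ := ih (fun i hi => hno i (le_trans hi (Nat.le_succ j)))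
      have hP : l (q j) < m ∧ ω₀ (l (q j)) = q j :=
        Nat.findGreatest_spec (P := fun t => t < m ∧ ω₀ t = q j) (le_of_lt htm) ⟨htm, htq⟩
      have hge : t ≤ l (q j) :=
        Nat.le_findGreatest (P := fun t => t < m ∧ ω₀ t = q j) (le_of_lt htm) ⟨htm, htq⟩
      have hcq : q (j+1) = ω₀ (l (q j) + 1) := by
        rw [hqs]
        exact hc3 (q j) ⟨hno j (Nat.le_succ j), ⟨t, htm, htq⟩⟩
      have hltm : l (q j) + 1 < m := by
        rcases lt_or_eq_of_le (Nat.succ_le_of_lt hP.1) with h' | h'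
        · exact h'
        · exfalso
          apply hno (j+1) le_rfl
          rw [hcq, show l (q j) + 1 = m from h']
          exact hmS
      exact ⟨l (q j) + 1, by omega, hltm, hcq.symm⟩
  have hkex : ∃ j, q j ∈ S := by
    by_contra hcon
    push_neg at hcon
    obtain ⟨t, htm, htm', _⟩ := hinv m (fun i _ => hcon i)
    omega
  set k := Nat.find hkex with hkdef
  have hkS : q k ∈ S := Nat.find_spec hkex
  have hkmin : ∀ i, i < k → q i ∉ S := fun i hi => Nat.find_min hkex hi
  have hocc : ∀ i, i < k → ∃ t, ω₀ t = q i := by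
    intro i hi
    obtain ⟨t, _, _, ht⟩ := hinv i (fun i' hi' => hkmin i' (lt_of_le_of_lt hi' hi))
    exact ⟨t, ht⟩
  have hqterm : ∀ i, ¬ G.Terminal (q i) := by
    intro i
    rcases lt_or_ge i k with hik | hik
    · obtain ⟨t, ht⟩ := hocc i hik
      rw [← ht]
      exact hterm t
    · have hqk : ∀ d, q (k+d) ∈ S := by
        intro d
        induction d with
        | zero => exact hkS
        | succ d ihd =>
          have : k + (d+1) = (k+d) + 1 := by omega
          rw [this, hqs]
          exact hc2 _ ihd
      have := hqk (i - k)
      rw [show k + (i-k) = i by omega] at this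
      exact hSterm _ this
  -- the finite word
  set wb : ℕ → V := fun i => q (min i k) with hwbdef
  have hwb : ∀ i, i ≤ k → wb i = q i := by
    intro i hi
    simp only [hwbdef, min_eq_left hi]
  have hcylpos : 0 < G.prefixProb (aux_dirac G c hc1) (aux_unif G) v k wb := by
    unfold StochGame.prefixProb
    apply mul_pos
    · rw [if_pos (by rw [hwb 0 (Nat.zero_le k), hq0]), ]
      norm_num
    · apply Finset.prod_pos
      intro i hi
      rw [Finset.mem_range] at hi
      rw [hwb i (le_of_lt hi), hwb (i+1) hi]
      unfold StochGame.step
      by_cases h1 : q i ∈ G.V1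
      · rw [if_pos h1]
        have : (aux_dirac G c hc1).f (hist wb i) (q i) (q (i+1))
            = if q (i+1) = c (q i) then 1 else 0 := rfl
        rw [this, if_pos (hqs i)]
        norm_num
      · rw [if_neg h1]
        by_cases h2 : q i ∈ G.V2
        · rw [if_pos h2]
          have : (aux_unif G).f (hist wb i) (q i) (q (i+1))
              = if 0 < G.δ (q i) (q (i+1))
                then (((Finset.univ.filter (fun z => 0 < G.δ (q i) z)).card : ℝ))⁻¹
                else 0 := rfl
          rw [this, if_pos (by rw [hqs]; exact hc1 (q i))]
          exact inv_pos.mpr (aux_unif_card_pos G (q i))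
        · rw [if_neg h2, hqs]
          exact hc1 (q i)
  -- leaving S has probability zero
  have hexit : ∀ t : ℕ, μ' {ω : ℕ → V | ω t ∈ S ∧ ω (t+1) ∉ S} = 0 := by
    intro t
    apply aux_measure_coordDet_zero G (aux_dirac G c hc1) (aux_unif G) v μ' hμ' (t+1)
      (fun ω => ω t ∈ S ∧ ω (t+1) ∉ S)
    · rintro ω ω' hag ⟨ha, hb⟩
      rw [← hag t (Nat.le_succ t), ← hag (t+1) le_rfl]
      exact ⟨ha, hb⟩
    · rintro w ⟨hwS, hwnS⟩
      unfold StochGame.prefixProb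
      apply mul_eq_zero_of_right
      apply Finset.prod_eq_zero (Finset.mem_range.mpr (Nat.lt_succ_self t))
      set x := aux_ext (t+1) w t
      set y := aux_ext (t+1) w (t+1)
      unfold StochGame.step
      by_cases h1 : x ∈ G.V1
      · rw [if_pos h1]
        have hf : (aux_dirac G c hc1).f (hist (aux_ext (t+1) w) t) x y
            = if y = c x then 1 else 0 := rfl
        rw [hf, if_neg]
        intro hyc
        exact hwnS (hyc ▸ hc2 x hwS)
      · rw [if_neg h1]
        have hnd : ¬ 0 < G.δ x y := fun hd => hwnS (hSclosed x hwS h1 y hd)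
        by_cases h2 : x ∈ G.V2
        · rw [if_pos h2]
          have hf : (aux_unif G).f (hist (aux_ext (t+1) w) t) x y
              = if 0 < G.δ x y
                then (((Finset.univ.filter (fun z => 0 < G.δ x z)).card : ℝ))⁻¹
                else 0 := rfl
          rw [hf, if_neg hnd]
        · rw [if_neg h2]
          exact le_antisymm (not_lt.mp hnd) (G.δ_nonneg x y)
  -- the surviving event
  set E := cyl k wb ∩ {ω : ℕ → V | ∀ t, k ≤ t → ω t ∈ S} with hEdef
  have hEmeas : MeasurableSet E := by
    apply (aux_cyl_meas k wb).inter
    have heq : {ω : ℕ → V | ∀ t, k ≤ t → ω t ∈ S}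
        = ⋂ (t : ℕ), {ω : ℕ → V | k ≤ t → ω t ∈ S} := by
      ext ω
      simp [Set.mem_iInter]
    rw [heq]
    apply MeasurableSet.iInter
    intro t
    by_cases hkt : k ≤ t
    · simp only [hkt, true_implies]
      show MeasurableSet ((fun ω : ℕ → V => ω t) ⁻¹' S)
      exact (measurable_pi_apply t) (MeasurableSet.of_discrete)
    · simp only [hkt, false_implies, Set.setOf_true]
      exact MeasurableSet.univ
  have hUnull : μ' (⋃ (t : ℕ), {ω : ℕ → V | ω t ∈ S ∧ ω (t+1) ∉ S}) = 0 := by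
    refine le_antisymm (le_trans (measure_iUnion_le _) (le_of_eq ?_)) (zero_le)
    rw [ENNReal.tsum_eq_zero]
    exact hexit
  have hsubE : cyl k wb \ (⋃ (t : ℕ), {ω : ℕ → V | ω t ∈ S ∧ ω (t+1) ∉ S}) ⊆ E := by
    rintro ω ⟨hωcyl, hωno⟩
    refine ⟨hωcyl, ?_⟩
    intro t hkt
    induction t, hkt using Nat.le_induction with
    | base =>
      have := hωcyl k le_rfl
      rw [this, hwb k le_rfl]
      exact hkS
    | succ t hkt iht =>
      by_contra hns
      exact hωno (Set.mem_iUnion.mpr ⟨t, iht, hns⟩)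
  have hEpos : 0 < μ' E := by
    have hcylval : μ' (cyl k wb)
        = ENNReal.ofReal (G.prefixProb (aux_dirac G c hc1) (aux_unif G) v k wb) :=
      hμ'.2 k wb
    have hpos : 0 < μ' (cyl k wb) := by
      rw [hcylval]
      exact ENNReal.ofReal_pos.mpr hcylpos
    calc 0 < μ' (cyl k wb) := hpos
      _ = μ' (cyl k wb \ (⋃ (t : ℕ), {ω : ℕ → V | ω t ∈ S ∧ ω (t+1) ∉ S})) :=
          (measure_diff_null hUnull).symm
      _ ≤ μ' E := measure_mono hsubE
  have hsubc : G.ReachT ⊆ Eᶜ := by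
    rintro ω ⟨i, hi⟩ ⟨hωcyl, hωS⟩
    rcases le_or_gt k i with hik | hik
    · exact hSterm _ (hωS i hik) hi
    · have := hωcyl i (le_of_lt hik)
      rw [this, hwb i (le_of_lt hik)] at hi
      exact hqterm i hi
  calc μ' G.ReachT ≤ μ' Eᶜ := measure_mono hsubc
    _ = 1 - μ' E := by rw [measure_compl hEmeas (measure_ne_top μ' E), measure_univ]
    _ < 1 := ENNReal.sub_lt_self ENNReal.one_ne_top one_ne_zero (ne_of_gt hEpos)
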